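/- Let n ≥ 2, let L ⊂ ℝ^{n−1} be a convex body with 0 ∈ int L, and let K ⊂ ℝⁿ be a convex body. Let π : ℝⁿ → ℝ^{n−1} be the orthogonal projection onto the first n−1 coordinates. Then ξ_L(π(K)) ≥ ξ_{L×[−1,1]}(K): every closed polygonal line in ℝ^{n−1} that does not fit into a translate of int π(K), viewed in the hyperplane ℝ^{n−1}×{0}, has ‖·‖_{L×[−1,1]}-length at least ξ_{L×[−1,1]}(K). -/

import Mathlib

open scoped BigOperators Pointwise RealInnerProductSpace
open MeasureTheory

noncomputable section

/-- The support-function "norm" `‖q‖_T = max_{p ∈ T} ⟨p, q⟩`. -/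
def suppNorm {d : ℕ} (T : Set (EuclideanSpace ℝ (Fin d)))
    (q : EuclideanSpace ℝ (Fin d)) : ℝ :=
  sSup ((fun p : EuclideanSpace ℝ (Fin d) => ⟪p, q⟫) '' T)

/-- Cyclic successor on `Fin m`. -/
def cyc {m : ℕ} (i : Fin m) : Fin m := ⟨(i.val + 1) % m, Nat.mod_lt _ i.pos⟩

/-- The `T`-length of the closed polygonal line through `q 0, …, q (m-1)`. -/
def polyLen {d : ℕ} (T : Set (EuclideanSpace ℝ (Fin d))) {m : ℕ}
    (q : Fin m → EuclideanSpace ℝ (Fin d)) : ℝ :=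
  ∑ i : Fin m, suppNorm T (q (cyc i) - q i)

/-- `q` does not fit into a translate of the interior of `K`. -/
def NotFit {d : ℕ} (K : Set (EuclideanSpace ℝ (Fin d))) {m : ℕ}
    (q : Fin m → EuclideanSpace ℝ (Fin d)) : Prop :=
  ∀ t : EuclideanSpace ℝ (Fin d), ¬ (∀ i, q i - t ∈ interior K)

/-- `ξ_T(K)`: the infimum of `T`-lengths of closed polygonal lines not fitting into a
translate of the interior of `K`. -/
def xi {d : ℕ} (T K : Set (EuclideanSpace ℝ (Fin d))) : ℝ :=
  sInf { L : ℝ | ∃ m : ℕ, 2 ≤ m ∧ ∃ q : Fin m → EuclideanSpace ℝ (Fin d),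
    NotFit K q ∧ L = polyLen T q }

/-- A convex body: compact, convex, with nonempty interior. -/
def IsConvexBody {d : ℕ} (K : Set (EuclideanSpace ℝ (Fin d))) : Prop :=
  IsCompact K ∧ Convex ℝ K ∧ (interior K).Nonempty

/-- The polar set `S° = {p : ⟨p, q⟩ ≤ 1 ∀ q ∈ S}`. -/
def polarSet {d : ℕ} (S : Set (EuclideanSpace ℝ (Fin d))) :
    Set (EuclideanSpace ℝ (Fin d)) :=
  { p | ∀ q ∈ S, ⟪p, q⟫ ≤ 1 }

/-- The permutohedron: the Minkowski sum of all edges of the simplex with vertices `v`. -/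
def permutohedron {n : ℕ} (v : Fin (n + 1) → EuclideanSpace ℝ (Fin n)) :
    Set (EuclideanSpace ℝ (Fin n)) :=
  ∑ p ∈ Finset.univ.filter (fun p : Fin (n + 1) × Fin (n + 1) => p.1 < p.2),
    segment ℝ (v p.1) (v p.2)

end

/-- The Lagrangian-product body `L × [-1,1] ⊆ ℝᵐ × ℝ = ℝ^{m+1}`. -/
def prodSeg {m : ℕ} (L : Set (EuclideanSpace ℝ (Fin m))) :
    Set (EuclideanSpace ℝ (Fin (m + 1))) :=
  { x | (show EuclideanSpace ℝ (Fin m) from WithLp.toLp 2 (fun i : Fin m => x i.castSucc)) ∈ L ∧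
        |x (Fin.last m)| ≤ 1 }

/-- The orthogonal projection `ℝ^{m+1} → ℝᵐ` onto the first `m` coordinates. -/
def projFirst {m : ℕ} (x : EuclideanSpace ℝ (Fin (m + 1))) : EuclideanSpace ℝ (Fin m) :=
  WithLp.toLp 2 (fun i : Fin m => x i.castSucc)

noncomputable section AuxProof

variable {m : ℕ}

/-- Embedding `ℝᵐ → ℝ^{m+1}` with last coordinate `0`. -/
def emb (v : EuclideanSpace ℝ (Fin m)) : EuclideanSpace ℝ (Fin (m + 1)) :=
  WithLp.toLp 2 (Fin.snoc (α := fun _ => ℝ) v.ofLp 0)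

lemma projFirst_emb (v : EuclideanSpace ℝ (Fin m)) : projFirst (emb v) = v := by
  ext i
  simp [projFirst, emb]

lemma inner_emb (p : EuclideanSpace ℝ (Fin (m + 1))) (v : EuclideanSpace ℝ (Fin m)) :
    ⟪p, emb v⟫ = ⟪projFirst p, v⟫ := by
  simp [PiLp.inner_apply, Fin.sum_univ_castSucc, emb, projFirst]

lemma emb_mem_prodSeg {L : Set (EuclideanSpace ℝ (Fin m))} {v : EuclideanSpace ℝ (Fin m)}
    (hv : v ∈ L) : emb v ∈ prodSeg L := by
  refine ⟨?_, ?_⟩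
  · show projFirst (emb v) ∈ L
    have : projFirst (emb v) = v := projFirst_emb v
    rw [this]; exact hv
  · show |emb v (Fin.last m)| ≤ 1
    have : emb v (Fin.last m) = 0 := Fin.snoc_last (α := fun _ => ℝ) _ _
    rw [this]; norm_num

lemma mem_L_of_mem_prodSeg {L : Set (EuclideanSpace ℝ (Fin m))}
    {p : EuclideanSpace ℝ (Fin (m + 1))} (hp : p ∈ prodSeg L) : projFirst p ∈ L := hp.1

lemma image_inner_prodSeg (L : Set (EuclideanSpace ℝ (Fin m))) (v : EuclideanSpace ℝ (Fin m)) :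
    (fun p : EuclideanSpace ℝ (Fin (m + 1)) => ⟪p, emb v⟫) '' prodSeg L
      = (fun p : EuclideanSpace ℝ (Fin m) => ⟪p, v⟫) '' L := by
  ext x
  constructor
  · rintro ⟨p, hp, rfl⟩
    exact ⟨projFirst p, mem_L_of_mem_prodSeg hp, (inner_emb p v).symm⟩
  · rintro ⟨p, hp, rfl⟩
    exact ⟨emb p, emb_mem_prodSeg hp, by
      show ⟪emb p, emb v⟫ = ⟪p, v⟫
      rw [inner_emb, projFirst_emb]⟩

lemma suppNorm_emb (L : Set (EuclideanSpace ℝ (Fin m))) (v : EuclideanSpace ℝ (Fin m)) :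
    suppNorm (prodSeg L) (emb v) = suppNorm L v := by
  unfold suppNorm
  rw [image_inner_prodSeg]

lemma emb_sub (a b : EuclideanSpace ℝ (Fin m)) : emb (a - b) = emb a - emb b := by
  ext i
  have h : (emb a - emb b) i = emb a i - emb b i := PiLp.sub_apply _ _ _ i
  rw [h]
  refine Fin.lastCases ?_ (fun j => ?_) i
  · show emb (a - b) (Fin.last m) = emb a (Fin.last m) - emb b (Fin.last m)
    simp [emb, Fin.snoc_last]
  · show emb (a - b) j.castSucc = emb a j.castSucc - emb b j.castSucc
    simp [emb, Fin.snoc_castSucc]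

lemma projFirst_sub (a b : EuclideanSpace ℝ (Fin (m + 1))) :
    projFirst (a - b) = projFirst a - projFirst b := by
  ext i; simp [projFirst]

/-- `projFirst` as a continuous linear map. -/
def projCLM : EuclideanSpace ℝ (Fin (m + 1)) →L[ℝ] EuclideanSpace ℝ (Fin m) :=
  LinearMap.toContinuousLinearMap
    { toFun := projFirst
      map_add' := fun _ _ => by ext; simp [projFirst]
      map_smul' := fun _ _ => by ext; simp [projFirst] }

lemma projCLM_coe : ⇑(projCLM (m := m)) = projFirst := rfl

lemma projCLM_surjective : Function.Surjective (projCLM (m := m)) :=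
  fun v => ⟨emb v, projFirst_emb v⟩

lemma image_interior_subset (K : Set (EuclideanSpace ℝ (Fin (m + 1)))) :
    projFirst '' interior K ⊆ interior (projFirst '' K) := by
  have ho : IsOpenMap (projCLM (m := m)) :=
    (projCLM (m := m)).isOpenMap projCLM_surjective
  have := ho.image_interior_subset K
  rwa [projCLM_coe] at this

lemma decomp (p : EuclideanSpace ℝ (Fin (m + 1))) :
    p = emb (projFirst p) + EuclideanSpace.single (Fin.last m) (p (Fin.last m)) := by
  ext i
  have h : (emb (projFirst p) + EuclideanSpace.single (Fin.last m) (p (Fin.last m))) i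
      = emb (projFirst p) i + EuclideanSpace.single (Fin.last m) (p (Fin.last m)) i :=
    PiLp.add_apply _ _ _ i
  rw [h]
  refine Fin.lastCases ?_ (fun j => ?_) i
  · simp [emb, Fin.snoc_last, EuclideanSpace.single_apply]
  · simp [emb, Fin.snoc_castSucc, EuclideanSpace.single_apply,
      (Fin.castSucc_lt_last j).ne, projFirst]

lemma norm_emb (v : EuclideanSpace ℝ (Fin m)) : ‖emb v‖ = ‖v‖ := by
  simp [EuclideanSpace.norm_eq, Fin.sum_univ_castSucc, emb]

lemma norm_le_of_mem_prodSeg {L : Set (EuclideanSpace ℝ (Fin m))} {C : ℝ}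
    (hC : L ⊆ Metric.closedBall 0 C) {p : EuclideanSpace ℝ (Fin (m + 1))}
    (hp : p ∈ prodSeg L) : ‖p‖ ≤ C + 1 := by
  have h1 : ‖projFirst p‖ ≤ C := by
    have := hC (mem_L_of_mem_prodSeg hp)
    rwa [Metric.mem_closedBall, dist_zero_right] at this
  have h2 : |p (Fin.last m)| ≤ 1 := hp.2
  calc ‖p‖ = ‖emb (projFirst p) + EuclideanSpace.single (Fin.last m) (p (Fin.last m))‖ := by
        rw [← decomp]
    _ ≤ ‖emb (projFirst p)‖ + ‖EuclideanSpace.single (Fin.last m) (p (Fin.last m))‖ :=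
        norm_add_le _ _
    _ ≤ C + 1 := by
        rw [norm_emb, EuclideanSpace.norm_single]
        exact add_le_add h1 (by rwa [Real.norm_eq_abs])

lemma suppNorm_prodSeg_nonneg {L : Set (EuclideanSpace ℝ (Fin m))} (hL : IsConvexBody L)
    (h0 : (0 : EuclideanSpace ℝ (Fin m)) ∈ interior L)
    (w : EuclideanSpace ℝ (Fin (m + 1))) : 0 ≤ suppNorm (prodSeg L) w := by
  obtain ⟨C, hC⟩ := hL.1.isBounded.subset_closedBall 0
  have hzero : (0 : EuclideanSpace ℝ (Fin (m + 1))) ∈ prodSeg L := by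
    refine ⟨?_, ?_⟩
    · show projFirst (0 : EuclideanSpace ℝ (Fin (m + 1))) ∈ L
      have : projFirst (0 : EuclideanSpace ℝ (Fin (m + 1))) = 0 := by
        ext i; simp [projFirst]
      rw [this]; exact interior_subset h0
    · show |(0 : EuclideanSpace ℝ (Fin (m + 1))) (Fin.last m)| ≤ 1
      norm_num
  have hbdd : BddAbove ((fun p : EuclideanSpace ℝ (Fin (m + 1)) => ⟪p, w⟫) '' prodSeg L) := by
    refine ⟨(C + 1) * ‖w‖, ?_⟩
    rintro x ⟨p, hp, rfl⟩
    calc ⟪p, w⟫ ≤ ‖p‖ * ‖w‖ := real_inner_le_norm p w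
      _ ≤ (C + 1) * ‖w‖ :=
          mul_le_mul_of_nonneg_right (norm_le_of_mem_prodSeg hC hp) (norm_nonneg w)
  have hmem : (0 : ℝ) ∈ (fun p : EuclideanSpace ℝ (Fin (m + 1)) => ⟪p, w⟫) '' prodSeg L :=
    ⟨0, hzero, inner_zero_left w⟩
  exact le_csSup hbdd hmem

end AuxProof

/-- `ξ_L(π(K)) ≥ ξ_{L×[-1,1]}(K)` for the orthogonal projection `π` onto
the first `n - 1 = m` coordinates. -/
theorem xi_projection_ge (m : ℕ) (hm : 1 ≤ m)
    (L : Set (EuclideanSpace ℝ (Fin m))) (hL : IsConvexBody L)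
    (h0 : (0 : EuclideanSpace ℝ (Fin m)) ∈ interior L)
    (K : Set (EuclideanSpace ℝ (Fin (m + 1)))) (hK : IsConvexBody K) :
    xi L (projFirst '' K) ≥ xi (prodSeg L) K := by
  unfold xi
  apply csInf_le_csInf
  · -- BddBelow
    refine ⟨0, ?_⟩
    rintro x ⟨m', _, q, _, rfl⟩
    exact Finset.sum_nonneg fun i _ => suppNorm_prodSeg_nonneg hL h0 _
  · -- Nonempty: some polygon does not fit in a translate of int (projFirst '' K)
    have hcont : Continuous (projFirst (m := m)) := (projCLM (m := m)).continuous
    obtain ⟨r, hr⟩ := ((hK.1.image hcont).isBounded).subset_closedBall 0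
    set R := max r 0 with hR
    have hr' : projFirst '' K ⊆ Metric.closedBall 0 R :=
      hr.trans (Metric.closedBall_subset_closedBall (le_max_left _ _))
    have hR0 : 0 ≤ R := le_max_right _ _
    set c : EuclideanSpace ℝ (Fin m) := EuclideanSpace.single ⟨0, hm⟩ (2 * R + 1) with hc
    refine ⟨polyLen L (fun i : Fin 2 => if i = 0 then 0 else c), 2, le_refl 2,
      (fun i : Fin 2 => if i = 0 then 0 else c), ?_, rfl⟩
    intro t ht
    have h0' := ht 0
    have h1' := ht 1
    simp only [if_pos rfl] at h0'
    have h10 : (1 : Fin 2) ≠ 0 := by decide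
    simp only [if_neg h10] at h1'
    have hA : (0 : EuclideanSpace ℝ (Fin m)) - t ∈ Metric.closedBall 0 R :=
      hr' (interior_subset h0')
    have hB : c - t ∈ Metric.closedBall 0 R := hr' (interior_subset h1')
    rw [Metric.mem_closedBall, dist_zero_right] at hA hB
    have hnc : ‖c‖ = 2 * R + 1 := by
      rw [hc, EuclideanSpace.norm_single, Real.norm_eq_abs, abs_of_nonneg (by linarith)]
    have : ‖c‖ ≤ 2 * R := by
      have : c = (c - t) - ((0 : EuclideanSpace ℝ (Fin m)) - t) := by abel
      calc ‖c‖ = ‖(c - t) - ((0 : EuclideanSpace ℝ (Fin m)) - t)‖ := by rw [← this]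
        _ ≤ ‖c - t‖ + ‖(0 : EuclideanSpace ℝ (Fin m)) - t‖ := norm_sub_le _ _
        _ ≤ R + R := add_le_add hB hA
        _ = 2 * R := by ring
    linarith [hnc ▸ this]
  · -- subset
    rintro x ⟨m', hm', q, hq, rfl⟩
    refine ⟨m', hm', emb ∘ q, ?_, ?_⟩
    · intro t ht
      apply hq (projFirst t)
      intro i
      have h1 : emb (q i) - t ∈ interior K := ht i
      have h2 : projFirst (emb (q i) - t) ∈ projFirst '' interior K := ⟨_, h1, rfl⟩
      have h3 := image_interior_subset K h2
      rwa [projFirst_sub, projFirst_emb] at h3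
    · unfold polyLen
      refine Finset.sum_congr rfl fun i _ => ?_
      show suppNorm L (q (cyc i) - q i) = suppNorm (prodSeg L) ((emb ∘ q) (cyc i) - (emb ∘ q) i)
      rw [show (emb ∘ q) (cyc i) - (emb ∘ q) i = emb (q (cyc i) - q i) from (emb_sub _ _).symm,
        suppNorm_emb]
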